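/- The square root of the Jensen–Shannon divergence satisfies the triangle inequality on probability mass functions over a finite set: for pmfs p, q, r, √JS(p‖r) ≤ √JS(p‖q) + √JS(q‖r). -/

import Mathlib

/-- Jensen–Shannon divergence between pmfs on a finite set, natural log. -/
noncomputable def JSdiv {D : Type*} [Fintype D] (p q : D → ℝ) : ℝ :=
  (1 / 2) * ∑ d, p d * Real.log (p d / ((p d + q d) / 2))
    + (1 / 2) * ∑ d, q d * Real.log (q d / ((p d + q d) / 2))

open Real Filter MeasureTheory Topology Set



/-- numerators: a = t(x-z)²(2y+t)(x+y+t)(y+z+t), etc. -/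
private lemma key_poly (x y z t : ℝ) (hx : 0 ≤ x) (hy : 0 ≤ y) (hz : 0 ≤ z) (ht : 0 ≤ t) :
    (t*(x-z)^2*((2*y+t)*((x+y+t)*(y+z+t)))
     - t*(x-y)^2*((2*z+t)*((x+z+t)*(y+z+t)))
     - t*(y-z)^2*((2*x+t)*((x+z+t)*(x+y+t))))^2
    ≤ 4*(t*(x-y)^2*((2*z+t)*((x+z+t)*(y+z+t))))*(t*(y-z)^2*((2*x+t)*((x+z+t)*(x+y+t)))) := by
  have h : 4*(t*(x-y)^2*((2*z+t)*((x+z+t)*(y+z+t))))*(t*(y-z)^2*((2*x+t)*((x+z+t)*(x+y+t))))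
      - (t*(x-z)^2*((2*y+t)*((x+y+t)*(y+z+t)))
        - t*(x-y)^2*((2*z+t)*((x+z+t)*(y+z+t)))
        - t*(y-z)^2*((2*x+t)*((x+z+t)*(x+y+t))))^2
      = (x-y)^2*(y-z)^2*(x-z)^2 *
        (3*t^6 + 8*t^5*(x+y+z)
          + 4*t^4*(x^2+y^2+z^2+5*(x*y)+5*(x*z)+5*(y*z))
          + 8*t^3*(x^2*y+x^2*z+x*y^2+6*(x*y*z)+x*z^2+y^2*z+y*z^2)
          + 16*t^2*(x*y*z*(x+y+z))) := by ring
  have hpos : 0 ≤ (x-y)^2*(y-z)^2*(x-z)^2 *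
        (3*t^6 + 8*t^5*(x+y+z)
          + 4*t^4*(x^2+y^2+z^2+5*(x*y)+5*(x*z)+5*(y*z))
          + 8*t^3*(x^2*y+x^2*z+x*y^2+6*(x*y*z)+x*z^2+y^2*z+y*z^2)
          + 16*t^2*(x*y*z*(x+y+z))) := by positivity
  linarith [h, hpos]

/-- If (A-B-C)² ≤ 4BC with A,B,C ≥ 0 then √A ≤ √B + √C. -/
private lemma sqrt_tri_of_sq {A B C : ℝ} (hA : 0 ≤ A) (hB : 0 ≤ B) (hC : 0 ≤ C)
    (h : (A - B - C)^2 ≤ 4*B*C) : Real.sqrt A ≤ Real.sqrt B + Real.sqrt C := by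
  have h1 : A - B - C ≤ 2 * (Real.sqrt B * Real.sqrt C) := by
    have h2 : A - B - C ≤ |A - B - C| := le_abs_self _
    have h3 : |A - B - C| = Real.sqrt ((A - B - C)^2) := (Real.sqrt_sq_eq_abs _).symm
    have h4 : Real.sqrt ((A - B - C)^2) ≤ Real.sqrt (4*B*C) := Real.sqrt_le_sqrt h
    have h5 : Real.sqrt (4*B*C) = 2 * (Real.sqrt B * Real.sqrt C) := by
      rw [show (4:ℝ)*B*C = 2^2 * (B*C) by ring, Real.sqrt_mul (by positivity),
        Real.sqrt_sq (by norm_num), Real.sqrt_mul hB]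
    linarith
  have h6 : A ≤ (Real.sqrt B + Real.sqrt C)^2 := by
    have := Real.sq_sqrt hB
    have := Real.sq_sqrt hC
    nlinarith
  calc Real.sqrt A ≤ Real.sqrt ((Real.sqrt B + Real.sqrt C)^2) := Real.sqrt_le_sqrt h6
    _ = Real.sqrt B + Real.sqrt C := Real.sqrt_sq (by positivity)

/-- the Fuglede–Topsøe integrand -/
noncomputable def Jker (u v t : ℝ) : ℝ := t*(u-v)^2 / ((2*u+t)*(2*v+t)*(u+v+t))

lemma Jker_nonneg {u v t : ℝ} (hu : 0 ≤ u) (hv : 0 ≤ v) (ht : 0 ≤ t) : 0 ≤ Jker u v t := by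
  unfold Jker
  have : (0:ℝ) ≤ (2*u+t)*(2*v+t)*(u+v+t) := by positivity
  positivity

private lemma frac_tri {a b c Δ : ℝ} (ha : 0 ≤ a) (hb : 0 ≤ b) (hc : 0 ≤ c) (hΔ : 0 < Δ)
    (h : (a - b - c)^2 ≤ 4*b*c) :
    Real.sqrt (a/Δ) ≤ Real.sqrt (b/Δ) + Real.sqrt (c/Δ) := by
  apply sqrt_tri_of_sq (by positivity) (by positivity) (by positivity)
  have e : a/Δ - b/Δ - c/Δ = (a - b - c)/Δ := by ring
  rw [e, div_pow, show 4*(b/Δ)*(c/Δ) = (4*b*c)/Δ^2 by ring]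
  exact (div_le_div_iff_of_pos_right (by positivity)).mpr h

/-- pointwise triangle inequality for √Jker -/
lemma Jker_tri {x y z t : ℝ} (hx : 0 ≤ x) (hy : 0 ≤ y) (hz : 0 ≤ z) (ht : 0 < t) :
    Real.sqrt (Jker x z t) ≤ Real.sqrt (Jker x y t) + Real.sqrt (Jker y z t) := by
  have d1 : (0:ℝ) < (2*x+t)*(2*z+t)*(x+z+t) := by positivity
  have d2 : (0:ℝ) < (2*x+t)*(2*y+t)*(x+y+t) := by positivity
  have d3 : (0:ℝ) < (2*y+t)*(2*z+t)*(y+z+t) := by positivity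
  have hD : (0:ℝ) < (2*x+t)*(2*y+t)*(2*z+t)*((x+y+t)*(y+z+t)*(x+z+t)) := by positivity
  have eA : Jker x z t = (t*(x-z)^2*((2*y+t)*((x+y+t)*(y+z+t)))) /
      ((2*x+t)*(2*y+t)*(2*z+t)*((x+y+t)*(y+z+t)*(x+z+t))) := by
    unfold Jker; rw [div_eq_div_iff d1.ne' hD.ne']; ring
  have eB : Jker x y t = (t*(x-y)^2*((2*z+t)*((x+z+t)*(y+z+t)))) /
      ((2*x+t)*(2*y+t)*(2*z+t)*((x+y+t)*(y+z+t)*(x+z+t))) := by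
    unfold Jker; rw [div_eq_div_iff d2.ne' hD.ne']; ring
  have eC : Jker y z t = (t*(y-z)^2*((2*x+t)*((x+z+t)*(x+y+t)))) /
      ((2*x+t)*(2*y+t)*(2*z+t)*((x+y+t)*(y+z+t)*(x+z+t))) := by
    unfold Jker; rw [div_eq_div_iff d3.ne' hD.ne']; ring
  rw [eA, eB, eC]
  exact frac_tri (by positivity) (by positivity) (by positivity) hD
    (key_poly x y z t hx hy hz ht.le)

noncomputable def Fdiv (u v : ℝ) : ℝ :=
  u * Real.log (u / ((u+v)/2)) + v * Real.log (v / ((u+v)/2))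

noncomputable def Phi (u v t : ℝ) : ℝ :=
  (u+v) * Real.log (t+(u+v)) - u * Real.log (t+2*u) - v * Real.log (t+2*v)

private lemma deriv_term (c k t : ℝ) (h : t + k ≠ 0) :
    HasDerivAt (fun s => c * Real.log (s + k)) (c * (1/(t+k))) t := by
  have h1 : HasDerivAt (fun s : ℝ => s + k) 1 t := (hasDerivAt_id t).add_const k
  exact (h1.log h).const_mul c |>.congr_deriv (by ring)

lemma Phi_hasDeriv {u v : ℝ} (hu : 0 ≤ u) (hv : 0 ≤ v) {t : ℝ} (ht : 0 < t) :
    HasDerivAt (Phi u v) (Jker u v t) t := by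
  have h1 : t + (u+v) ≠ 0 := by positivity
  have h2 : t + 2*u ≠ 0 := by positivity
  have h3 : t + 2*v ≠ 0 := by positivity
  have hd := ((deriv_term (u+v) (u+v) t h1).sub (deriv_term u (2*u) t h2)).sub
    (deriv_term v (2*v) t h3)
  have : Jker u v t = (u+v) * (1/(t+(u+v))) - u * (1/(t+2*u)) - v * (1/(t+2*v)) := by
    unfold Jker
    rw [div_eq_iff (by positivity)]
    field_simp
    ring
  rw [this]
  exact hd

private lemma log_ratio_tendsto (a b : ℝ) :
    Tendsto (fun t : ℝ => Real.log (t+a) - Real.log (t+b)) atTop (𝓝 0) := by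
  have h1 : Tendsto (fun t : ℝ => (a-b)/(t+b)) atTop (𝓝 0) :=
    Tendsto.div_atTop tendsto_const_nhds (tendsto_atTop_add_const_right _ b tendsto_id)
  have h2 : Tendsto (fun t : ℝ => 1 + (a-b)/(t+b)) atTop (𝓝 1) := by
    simpa using h1.const_add 1
  have h3 : Tendsto (fun t : ℝ => Real.log (1 + (a-b)/(t+b))) atTop (𝓝 0) := by
    have := (Real.continuousAt_log one_ne_zero).tendsto.comp h2
    simpa [Function.comp_def] using this
  apply h3.congr'
  filter_upwards [eventually_gt_atTop (max (max (-a) (-b)) 0)] with t htt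
  have ha : 0 < t + a := by have := lt_of_le_of_lt (le_max_left (-a) (-b)) (lt_of_le_of_lt (le_max_left _ 0) htt); linarith
  have hb : 0 < t + b := by have := lt_of_le_of_lt (le_max_right (-a) (-b)) (lt_of_le_of_lt (le_max_left _ 0) htt); linarith
  rw [show 1 + (a-b)/(t+b) = (t+a)/(t+b) by field_simp; ring]
  rw [Real.log_div ha.ne' hb.ne']

lemma Phi_tendsto (u v : ℝ) : Tendsto (Phi u v) atTop (𝓝 0) := by
  have h1 := (log_ratio_tendsto (u+v) (2*u)).const_mul u
  have h2 := (log_ratio_tendsto (u+v) (2*v)).const_mul v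
  have h3 := h1.add h2
  rw [show u*(0:ℝ) + v*0 = 0 by ring] at h3
  apply h3.congr
  intro t; unfold Phi; ring

private lemma cont_term (c k : ℝ) (h : c = 0 ∨ 0 < k) :
    ContinuousWithinAt (fun t : ℝ => c * Real.log (t+k)) (Ici 0) 0 := by
  rcases h with h | h
  · simp only [h, zero_mul]; exact continuousWithinAt_const
  · apply ContinuousAt.continuousWithinAt
    have : ContinuousAt (fun t : ℝ => t + k) 0 := continuousAt_id.add continuousAt_const
    exact (this.log (by simpa using h.ne')).const_mul c

lemma Phi_contWithin {u v : ℝ} (hu : 0 ≤ u) (hv : 0 ≤ v) :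
    ContinuousWithinAt (Phi u v) (Ici 0) 0 := by
  have c1 : ContinuousWithinAt (fun t : ℝ => (u+v) * Real.log (t+(u+v))) (Ici 0) 0 := by
    apply cont_term
    rcases eq_or_lt_of_le (by linarith : (0:ℝ) ≤ u + v) with h | h
    · exact Or.inl h.symm
    · exact Or.inr h
  have c2 : ContinuousWithinAt (fun t : ℝ => u * Real.log (t+2*u)) (Ici 0) 0 := by
    apply cont_term
    rcases eq_or_lt_of_le hu with h | h
    · exact Or.inl h.symm
    · exact Or.inr (by linarith)
  have c3 : ContinuousWithinAt (fun t : ℝ => v * Real.log (t+2*v)) (Ici 0) 0 := by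
    apply cont_term
    rcases eq_or_lt_of_le hv with h | h
    · exact Or.inl h.symm
    · exact Or.inr (by linarith)
  exact (c1.sub c2).sub c3

lemma Phi_zero_eq {u v : ℝ} (hu : 0 ≤ u) (hv : 0 ≤ v) : Fdiv u v = 0 - Phi u v 0 := by
  unfold Fdiv Phi
  rcases eq_or_lt_of_le hu with hu0 | hu0
  · rcases eq_or_lt_of_le hv with hv0 | hv0
    · simp [← hu0, ← hv0]
    · rw [← hu0]
      have hv2 : v/2 ≠ 0 := by positivity
      simp only [zero_mul, zero_add, add_zero, mul_zero, zero_sub, neg_sub, sub_zero]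
      rw [show v / (v/2) = 2 by field_simp, Real.log_mul two_ne_zero (by positivity)]
      ring
  · rcases eq_or_lt_of_le hv with hv0 | hv0
    · rw [← hv0]
      simp only [zero_mul, add_zero, mul_zero, zero_sub, neg_sub, sub_zero, zero_add]
      rw [show u / (u/2) = 2 by field_simp, Real.log_mul two_ne_zero (by positivity)]
      ring
    · have hs : 0 < u + v := by linarith
      rw [Real.log_div hu0.ne' (by positivity), Real.log_div hv0.ne' (by positivity),
        Real.log_div (by positivity) two_ne_zero,
        show (0:ℝ)+(u+v) = u+v by ring, show (0:ℝ)+2*u = 2*u by ring,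
        show (0:ℝ)+2*v = 2*v by ring,
        Real.log_mul two_ne_zero hu0.ne', Real.log_mul two_ne_zero hv0.ne']
      ring

lemma Jker_nonneg' {u v : ℝ} (hu : 0 ≤ u) (hv : 0 ≤ v) {t : ℝ} (ht : 0 < t) :
    0 ≤ Jker u v t := by
  unfold Jker
  have h : (0:ℝ) < (2*u+t)*(2*v+t)*(u+v+t) := by positivity
  positivity

lemma Jker_integrable {u v : ℝ} (hu : 0 ≤ u) (hv : 0 ≤ v) :
    IntegrableOn (fun t => Jker u v t) (Ioi 0) := by
  apply integrableOn_Ioi_deriv_of_nonneg (Phi_contWithin hu hv)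
    (fun t ht => Phi_hasDeriv hu hv ht) (fun t ht => Jker_nonneg' hu hv ht)
    (Phi_tendsto u v)

lemma Fdiv_eq_integral {u v : ℝ} (hu : 0 ≤ u) (hv : 0 ≤ v) :
    ∫ t in Ioi 0, Jker u v t = Fdiv u v := by
  rw [integral_Ioi_of_hasDerivAt_of_nonneg (Phi_contWithin hu hv)
    (fun t ht => Phi_hasDeriv hu hv ht) (fun t ht => Jker_nonneg' hu hv ht)
    (Phi_tendsto u v)]
  exact (Phi_zero_eq hu hv).symm

lemma Fdiv_nonneg {u v : ℝ} (hu : 0 ≤ u) (hv : 0 ≤ v) : 0 ≤ Fdiv u v := by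
  rw [← Fdiv_eq_integral hu hv]
  apply setIntegral_nonneg measurableSet_Ioi
  exact fun t ht => Jker_nonneg' hu hv ht

lemma Jker_contOn {u v : ℝ} (hu : 0 ≤ u) (hv : 0 ≤ v) :
    ContinuousOn (fun t => Jker u v t) (Ioi 0) := by
  unfold Jker
  apply ContinuousOn.div (Continuous.continuousOn (by continuity))
    (Continuous.continuousOn (by continuity))
  intro t ht
  have h : (0:ℝ) < t := ht
  positivity

lemma sqrt_mul_integrable {x y z : ℝ} (hx : 0 ≤ x) (hy : 0 ≤ y) (hz : 0 ≤ z) :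
    IntegrableOn (fun t => Real.sqrt (Jker x y t) * Real.sqrt (Jker y z t)) (Ioi 0) := by
  have hg : Integrable (fun t => (Jker x y t + Jker y z t) / 2) (volume.restrict (Ioi 0)) :=
    ((Jker_integrable hx hy).add (Jker_integrable hy hz)).div_const 2
  apply Integrable.mono' hg
  · exact ((continuous_sqrt.comp_continuousOn (Jker_contOn hx hy)).mul
      (continuous_sqrt.comp_continuousOn (Jker_contOn hy hz))).aestronglyMeasurable
      measurableSet_Ioi
  · filter_upwards [ae_restrict_mem measurableSet_Ioi] with t ht
    have h1 := Jker_nonneg' hx hy ht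
    have h2 := Jker_nonneg' hy hz ht
    rw [Real.norm_eq_abs, abs_of_nonneg (by positivity)]
    have s1 := Real.sq_sqrt h1
    have s2 := Real.sq_sqrt h2
    nlinarith [sq_nonneg (Real.sqrt (Jker x y t) - Real.sqrt (Jker y z t))]

lemma cs_integral {x y z : ℝ} (hx : 0 ≤ x) (hy : 0 ≤ y) (hz : 0 ≤ z) :
    ∫ t in Ioi 0, Real.sqrt (Jker x y t) * Real.sqrt (Jker y z t)
      ≤ Real.sqrt (Fdiv x y) * Real.sqrt (Fdiv y z) := by
  set F1 := Fdiv x y with hF1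
  set F2 := Fdiv y z with hF2
  have hF1n : 0 ≤ F1 := Fdiv_nonneg hx hy
  have hF2n : 0 ≤ F2 := Fdiv_nonneg hy hz
  rcases eq_or_lt_of_le hF1n with h0 | hF1p
  · -- F1 = 0 : Jker x y = 0 a.e.
    have hint : ∫ t in Ioi 0, Jker x y t = 0 := by rw [Fdiv_eq_integral hx hy, ← hF1, ← h0]
    have hae : (fun t => Jker x y t) =ᵐ[volume.restrict (Ioi 0)] 0 := by
      rw [← integral_eq_zero_iff_of_nonneg_ae _ (Jker_integrable hx hy)]
      · exact hint
      · filter_upwards [ae_restrict_mem measurableSet_Ioi] with t ht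
        exact Jker_nonneg' hx hy ht
    have : ∫ t in Ioi 0, Real.sqrt (Jker x y t) * Real.sqrt (Jker y z t) = 0 := by
      rw [integral_eq_zero_iff_of_nonneg_ae _ (sqrt_mul_integrable hx hy hz)]
      · filter_upwards [hae] with t ht
        simp [ht]
      · filter_upwards [ae_restrict_mem measurableSet_Ioi, hae] with t ht h0'
        have := Jker_nonneg' hx hy ht; have := Jker_nonneg' hy hz ht
        positivity
    rw [this]; positivity
  · rcases eq_or_lt_of_le hF2n with h0 | hF2p
    · have hint : ∫ t in Ioi 0, Jker y z t = 0 := by rw [Fdiv_eq_integral hy hz, ← hF2, ← h0]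
      have hae : (fun t => Jker y z t) =ᵐ[volume.restrict (Ioi 0)] 0 := by
        rw [← integral_eq_zero_iff_of_nonneg_ae _ (Jker_integrable hy hz)]
        · exact hint
        · filter_upwards [ae_restrict_mem measurableSet_Ioi] with t ht
          exact Jker_nonneg' hy hz ht
      have : ∫ t in Ioi 0, Real.sqrt (Jker x y t) * Real.sqrt (Jker y z t) = 0 := by
        rw [integral_eq_zero_iff_of_nonneg_ae _ (sqrt_mul_integrable hx hy hz)]
        · filter_upwards [hae] with t ht
          simp [ht]
        · filter_upwards [ae_restrict_mem measurableSet_Ioi, hae] with t ht h0'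
          have := Jker_nonneg' hx hy ht; have := Jker_nonneg' hy hz ht
          positivity
      rw [this]; positivity
    · -- both positive, AM-GM with mu = sqrt F2 / sqrt F1
      have hs1 : Real.sqrt F1 ≠ 0 := (Real.sqrt_pos.mpr hF1p).ne'
      have hs2 : Real.sqrt F2 ≠ 0 := (Real.sqrt_pos.mpr hF2p).ne'
      set μ := Real.sqrt F2 / Real.sqrt F1 with hμ
      have hμp : 0 < μ := div_pos (Real.sqrt_pos.mpr hF2p) (Real.sqrt_pos.mpr hF1p)
      have hint : IntegrableOn
          (fun t => (μ * Jker x y t + Jker y z t / μ) / 2) (Ioi 0) :=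
        (((Jker_integrable hx hy).const_mul μ).add
          ((Jker_integrable hy hz).div_const μ)).div_const 2
      have hmono : ∫ t in Ioi 0, Real.sqrt (Jker x y t) * Real.sqrt (Jker y z t)
          ≤ ∫ t in Ioi 0, (μ * Jker x y t + Jker y z t / μ) / 2 := by
        apply setIntegral_mono_on (sqrt_mul_integrable hx hy hz) hint measurableSet_Ioi
        intro t ht
        have h1 := Jker_nonneg' hx hy ht
        have h2 := Jker_nonneg' hy hz ht
        have s1 := Real.sq_sqrt h1
        have s2 := Real.sq_sqrt h2
        have h3 : 2*μ*(Real.sqrt (Jker x y t) * Real.sqrt (Jker y z t))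
            ≤ μ^2 * Jker x y t + Jker y z t := by
          nlinarith [sq_nonneg (μ * Real.sqrt (Jker x y t) - Real.sqrt (Jker y z t))]
        rw [← sub_nonneg]
        have e : (μ * Jker x y t + Jker y z t / μ) / 2
            - Real.sqrt (Jker x y t) * Real.sqrt (Jker y z t)
            = (μ^2 * Jker x y t + Jker y z t
                - 2*μ*(Real.sqrt (Jker x y t) * Real.sqrt (Jker y z t))) / (2*μ) := by
          field_simp
        rw [e]
        apply div_nonneg (by linarith) (by positivity)
      have ha : Integrable (fun t => μ * Jker x y t) (volume.restrict (Ioi 0)) :=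
        (Jker_integrable hx hy).const_mul μ
      have hb : Integrable (fun t => Jker y z t / μ) (volume.restrict (Ioi 0)) :=
        (Jker_integrable hy hz).div_const μ
      have hval : ∫ t in Ioi 0, (μ * Jker x y t + Jker y z t / μ) / 2
          = (μ * F1 + F2 / μ) / 2 := by
        rw [integral_div, integral_add ha hb, integral_const_mul, integral_div,
          Fdiv_eq_integral hx hy, Fdiv_eq_integral hy hz]
      have r1 : Real.sqrt F1 ^ 2 = F1 := Real.sq_sqrt hF1n
      have r2 : Real.sqrt F2 ^ 2 = F2 := Real.sq_sqrt hF2n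
      have e2 : (μ * F1 + F2 / μ) / 2 = Real.sqrt F1 * Real.sqrt F2 := by
        rw [hμ]
        field_simp
        linear_combination (F2 - 2*Real.sqrt F2 ^ 2) * r1 - F1 * r2
      rw [← e2]
      rw [hval] at hmono
      exact hmono

lemma Fdiv_tri {x y z : ℝ} (hx : 0 ≤ x) (hy : 0 ≤ y) (hz : 0 ≤ z) :
    Real.sqrt (Fdiv x z) ≤ Real.sqrt (Fdiv x y) + Real.sqrt (Fdiv y z) := by
  have hF1n := Fdiv_nonneg hx hy
  have hF2n := Fdiv_nonneg hy hz
  have key : Fdiv x z ≤ (Real.sqrt (Fdiv x y) + Real.sqrt (Fdiv y z))^2 := by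
    have hint : IntegrableOn (fun t => Jker x y t + Jker y z t
        + 2 * (Real.sqrt (Jker x y t) * Real.sqrt (Jker y z t))) (Ioi 0) :=
      ((Jker_integrable hx hy).add (Jker_integrable hy hz)).add
        ((sqrt_mul_integrable hx hy hz).const_mul 2)
    have step1 : Fdiv x z ≤ ∫ t in Ioi 0, (Jker x y t + Jker y z t
        + 2 * (Real.sqrt (Jker x y t) * Real.sqrt (Jker y z t))) := by
      rw [← Fdiv_eq_integral hx hz]
      apply setIntegral_mono_on (Jker_integrable hx hz) hint measurableSet_Ioi
      intro t ht
      have h1 := Jker_nonneg' hx hy ht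
      have h2 := Jker_nonneg' hy hz ht
      have h3 := Jker_nonneg' hx hz ht
      have htri := Jker_tri hx hy hz ht
      have s1 := Real.sq_sqrt h1
      have s2 := Real.sq_sqrt h2
      have s3 := Real.sq_sqrt h3
      nlinarith [Real.sqrt_nonneg (Jker x z t), Real.sqrt_nonneg (Jker x y t),
        Real.sqrt_nonneg (Jker y z t)]
    have step2 : ∫ t in Ioi 0, (Jker x y t + Jker y z t
        + 2 * (Real.sqrt (Jker x y t) * Real.sqrt (Jker y z t)))
        = Fdiv x y + Fdiv y z
          + 2 * ∫ t in Ioi 0, Real.sqrt (Jker x y t) * Real.sqrt (Jker y z t) := by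
      have ha : Integrable (fun t => Jker x y t + Jker y z t) (volume.restrict (Ioi 0)) :=
        (Jker_integrable hx hy).add (Jker_integrable hy hz)
      have hb : Integrable
          (fun t => 2 * (Real.sqrt (Jker x y t) * Real.sqrt (Jker y z t)))
          (volume.restrict (Ioi 0)) :=
        (sqrt_mul_integrable hx hy hz).const_mul 2
      rw [integral_add ha hb, integral_add (Jker_integrable hx hy) (Jker_integrable hy hz),
        integral_const_mul, Fdiv_eq_integral hx hy, Fdiv_eq_integral hy hz]
    have step3 := cs_integral hx hy hz
    have expand : (Real.sqrt (Fdiv x y) + Real.sqrt (Fdiv y z))^2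
        = Fdiv x y + Fdiv y z + 2*(Real.sqrt (Fdiv x y) * Real.sqrt (Fdiv y z)) := by
      have := Real.sq_sqrt hF1n
      have := Real.sq_sqrt hF2n
      nlinarith
    linarith [step1, step2 ▸ step1]
  calc Real.sqrt (Fdiv x z)
      ≤ Real.sqrt ((Real.sqrt (Fdiv x y) + Real.sqrt (Fdiv y z))^2) := Real.sqrt_le_sqrt key
    _ = Real.sqrt (Fdiv x y) + Real.sqrt (Fdiv y z) := Real.sqrt_sq (by positivity)



lemma JSdiv_eq {D : Type*} [Fintype D] (p q : D → ℝ) :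
    JSdiv p q = ∑ d, (1/2) * Fdiv (p d) (q d) := by
  unfold JSdiv Fdiv
  rw [Finset.mul_sum, Finset.mul_sum, ← Finset.sum_add_distrib]
  apply Finset.sum_congr rfl
  intros; ring

private lemma minkowski_fin {ι : Type*} (s : Finset ι) (f g : ι → ℝ) :
    Real.sqrt (∑ i ∈ s, (f i + g i)^2)
      ≤ Real.sqrt (∑ i ∈ s, f i ^ 2) + Real.sqrt (∑ i ∈ s, g i ^ 2) := by
  have hf : 0 ≤ ∑ i ∈ s, f i ^ 2 := Finset.sum_nonneg fun i _ => sq_nonneg _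
  have hg : 0 ≤ ∑ i ∈ s, g i ^ 2 := Finset.sum_nonneg fun i _ => sq_nonneg _
  have cs : ∑ i ∈ s, f i * g i ≤ Real.sqrt (∑ i ∈ s, f i ^ 2) * Real.sqrt (∑ i ∈ s, g i ^ 2) := by
    have h1 : ∑ i ∈ s, f i * g i ≤ |∑ i ∈ s, f i * g i| := le_abs_self _
    have h2 : |∑ i ∈ s, f i * g i| = Real.sqrt ((∑ i ∈ s, f i * g i)^2) :=
      (Real.sqrt_sq_eq_abs _).symm
    have h3 := Real.sqrt_le_sqrt (Finset.sum_mul_sq_le_sq_mul_sq s f g)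
    rw [Real.sqrt_mul hf] at h3
    linarith
  have key : ∑ i ∈ s, (f i + g i)^2
      ≤ (Real.sqrt (∑ i ∈ s, f i ^ 2) + Real.sqrt (∑ i ∈ s, g i ^ 2))^2 := by
    have e : ∑ i ∈ s, (f i + g i)^2
        = ∑ i ∈ s, f i ^2 + ∑ i ∈ s, g i ^2 + 2 * ∑ i ∈ s, f i * g i := by
      rw [← Finset.sum_add_distrib, Finset.mul_sum, ← Finset.sum_add_distrib]
      apply Finset.sum_congr rfl; intros; ring
    have s1 := Real.sq_sqrt hf
    have s2 := Real.sq_sqrt hg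
    nlinarith
  calc Real.sqrt (∑ i ∈ s, (f i + g i)^2)
      ≤ Real.sqrt ((Real.sqrt (∑ i ∈ s, f i ^ 2) + Real.sqrt (∑ i ∈ s, g i ^ 2))^2) :=
        Real.sqrt_le_sqrt key
    _ = _ := Real.sqrt_sq (by positivity)

theorem sqrt_js_triangle {D : Type*} [Fintype D] (p q r : D → ℝ)
    (hp : ∀ d, 0 ≤ p d) (hq : ∀ d, 0 ≤ q d) (hr : ∀ d, 0 ≤ r d)
    (hp1 : ∑ d, p d = 1) (hq1 : ∑ d, q d = 1) (hr1 : ∑ d, r d = 1) :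
    Real.sqrt (JSdiv p r) ≤ Real.sqrt (JSdiv p q) + Real.sqrt (JSdiv q r) := by
  classical
  set a : D → ℝ := fun d => Real.sqrt ((1/2) * Fdiv (p d) (q d)) with ha
  set b : D → ℝ := fun d => Real.sqrt ((1/2) * Fdiv (q d) (r d)) with hb
  have hasq : ∀ d, a d ^ 2 = (1/2) * Fdiv (p d) (q d) := fun d =>
    Real.sq_sqrt (by have := Fdiv_nonneg (hp d) (hq d); positivity)
  have hbsq : ∀ d, b d ^ 2 = (1/2) * Fdiv (q d) (r d) := fun d =>
    Real.sq_sqrt (by have := Fdiv_nonneg (hq d) (hr d); positivity)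
  have step1 : JSdiv p r ≤ ∑ d, (a d + b d)^2 := by
    rw [JSdiv_eq]
    apply Finset.sum_le_sum
    intro d _
    have htri : Real.sqrt ((1/2) * Fdiv (p d) (r d)) ≤ a d + b d := by
      rw [ha, hb]
      simp only []
      rw [Real.sqrt_mul (by norm_num : (0:ℝ) ≤ 1/2), Real.sqrt_mul (by norm_num : (0:ℝ) ≤ 1/2),
        Real.sqrt_mul (by norm_num : (0:ℝ) ≤ 1/2), ← mul_add]
      exact mul_le_mul_of_nonneg_left (Fdiv_tri (hp d) (hq d) (hr d)) (Real.sqrt_nonneg _)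
    calc (1/2) * Fdiv (p d) (r d)
        = Real.sqrt ((1/2) * Fdiv (p d) (r d)) ^ 2 :=
          (Real.sq_sqrt (by have := Fdiv_nonneg (hp d) (hr d); positivity)).symm
      _ ≤ (a d + b d)^2 := by
          apply pow_le_pow_left₀ (Real.sqrt_nonneg _) htri
  have step2 : Real.sqrt (JSdiv p r) ≤ Real.sqrt (∑ d, (a d + b d)^2) :=
    Real.sqrt_le_sqrt step1
  have step3 := minkowski_fin Finset.univ a b
  have e1 : ∑ d, a d ^ 2 = JSdiv p q := by
    rw [JSdiv_eq]; exact Finset.sum_congr rfl fun d _ => hasq d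
  have e2 : ∑ d, b d ^ 2 = JSdiv q r := by
    rw [JSdiv_eq]; exact Finset.sum_congr rfl fun d _ => hbsq d
  rw [e1, e2] at step3
  linarith
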